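/- For all n ≥ 0, 2^n ≤ p_n(α_{n+1}) and p_n(α_{n+2}) ≤ 2^{n+2}, where α_m = 4cos²(π/(m+2)). -/
import Mathlib


open Real Finset

noncomputable def p : ℕ → ℝ → ℝ
  | 0, x => x
  | 1, x => x * (x - 1)
  | (n+2), x => x * (p (n+1) x - p n x)

lemma p_key (θ : ℝ) (n : ℕ) :
    Real.sin θ * p n (4 * Real.cos θ ^ 2) =
      (2 * Real.cos θ) ^ (n + 1) * Real.sin (((n : ℝ) + 2) * θ) := by
  induction n using Nat.twoStepInduction with
  | zero =>
      have h : ((0 : ℕ) : ℝ) + 2 = 2 := by norm_num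
      rw [h, show (2 : ℝ) * θ = θ + θ by ring, Real.sin_add]
      simp only [p]; ring
  | one =>
      have h : ((1 : ℕ) : ℝ) + 2 = 3 := by norm_num
      rw [h, show (3 : ℝ) * θ = 3 * θ by ring, Real.sin_three_mul]
      have hsc := Real.sin_sq_add_cos_sq θ
      simp only [p]
      linear_combination (16 * Real.cos θ ^ 2 * Real.sin θ) * hsc
  | more n ih1 ih2 =>
      have hx : Real.sin θ * p (n + 2) (4 * Real.cos θ ^ 2) =
          4 * Real.cos θ ^ 2 *
            (Real.sin θ * p (n + 1) (4 * Real.cos θ ^ 2) -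
              Real.sin θ * p n (4 * Real.cos θ ^ 2)) := by
        simp only [p]; ring
      have e1 : Real.sin ((((n : ℕ) : ℝ) + 2 + 2) * θ) =
          2 * Real.cos θ * Real.sin ((((n : ℕ) : ℝ) + 1 + 2) * θ) -
            Real.sin ((((n : ℕ) : ℝ) + 2) * θ) := by
        have h1 : (((n : ℕ) : ℝ) + 2 + 2) * θ = (((n : ℕ) : ℝ) + 1 + 2) * θ + θ := by ring
        have h2 : (((n : ℕ) : ℝ) + 2) * θ = (((n : ℕ) : ℝ) + 1 + 2) * θ - θ := by ring
        rw [h1, h2, Real.sin_add, Real.sin_sub]; ring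
      push_cast
      push_cast at ih1 ih2
      rw [hx, ih1, ih2, e1]
      ring

lemma p_val1 (n : ℕ) :
    p n (4 * Real.cos (Real.pi / ((n : ℝ) + 3)) ^ 2) =
      (2 * Real.cos (Real.pi / ((n : ℝ) + 3))) ^ (n + 1) := by
  set θ := Real.pi / ((n : ℝ) + 3) with hθ
  have hn3 : (0 : ℝ) < (n : ℝ) + 3 := by positivity
  have hθpos : 0 < θ := div_pos Real.pi_pos hn3
  have hθlt : θ < Real.pi := by
    rw [hθ, div_lt_iff₀ hn3]
    nlinarith [Real.pi_pos, (Nat.cast_nonneg n : (0:ℝ) ≤ (n:ℝ))]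
  have hs : Real.sin θ ≠ 0 := ne_of_gt (Real.sin_pos_of_pos_of_lt_pi hθpos hθlt)
  have key := p_key θ n
  have harg : ((n : ℝ) + 2) * θ = Real.pi - θ := by
    rw [hθ]; field_simp; ring
  rw [harg, Real.sin_pi_sub] at key
  exact mul_left_cancel₀ hs (key.trans (mul_comm _ _))

lemma p_val2 (n : ℕ) :
    p n (4 * Real.cos (Real.pi / ((n : ℝ) + 4)) ^ 2) =
      (2 * Real.cos (Real.pi / ((n : ℝ) + 4))) ^ (n + 2) := by
  set θ := Real.pi / ((n : ℝ) + 4) with hθ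
  have hn4 : (0 : ℝ) < (n : ℝ) + 4 := by positivity
  have hθpos : 0 < θ := div_pos Real.pi_pos hn4
  have hθlt : θ < Real.pi := by
    rw [hθ, div_lt_iff₀ hn4]
    nlinarith [Real.pi_pos, (Nat.cast_nonneg n : (0:ℝ) ≤ (n:ℝ))]
  have hs : Real.sin θ ≠ 0 := ne_of_gt (Real.sin_pos_of_pos_of_lt_pi hθpos hθlt)
  have key := p_key θ n
  have harg : ((n : ℝ) + 2) * θ = Real.pi - 2 * θ := by
    rw [hθ]; field_simp; ring
  rw [harg, Real.sin_pi_sub, Real.sin_two_mul] at key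
  have key2 : Real.sin θ * p n (4 * Real.cos θ ^ 2) =
      Real.sin θ * (2 * Real.cos θ) ^ (n + 2) := by
    rw [key, pow_succ]; ring
  exact mul_left_cancel₀ hs key2

lemma cos_pow_ge (n : ℕ) : (1 : ℝ) / 2 ≤ Real.cos (Real.pi / ((n : ℝ) + 3)) ^ (n + 1) := by
  match n with
  | 0 =>
      norm_num [Real.cos_pi_div_three]
  | 1 =>
      have h : ((1 : ℕ) : ℝ) + 3 = 4 := by norm_num
      rw [h, Real.cos_pi_div_four]
      rw [show (1 : ℕ) + 1 = 2 from rfl, div_pow, Real.sq_sqrt (by norm_num : (0:ℝ) ≤ 2)]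
      norm_num
  | (m + 2) =>
      set k : ℝ := (m : ℝ) + 5 with hk
      have hk5 : (5 : ℝ) ≤ k := by rw [hk]; have := Nat.cast_nonneg (α := ℝ) m; linarith
      have hkpos : (0 : ℝ) < k := by linarith
      have hcast : ((m + 2 : ℕ) : ℝ) + 3 = k := by rw [hk]; push_cast; ring
      rw [hcast, show m + 2 + 1 = m + 3 by omega]
      set t := Real.pi / k with ht
      have htpos : 0 < t := div_pos Real.pi_pos hkpos
      have htle : t ≤ Real.pi / 5 := by rw [ht]; gcongr
      have hpi4 : Real.pi < 3.15 := by linarith [Real.pi_lt_d2]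
      have ht1 : t < 0.63 := lt_of_le_of_lt htle (by rw [div_lt_iff₀ (by norm_num : (0:ℝ) < 5)]; linarith)
      have hbase : (0 : ℝ) ≤ 1 - t ^ 2 / 2 := by nlinarith
      have hc : 1 - t ^ 2 / 2 ≤ Real.cos t := Real.one_sub_sq_div_two_le_cos
      have hpow : (1 - t ^ 2 / 2) ^ (m + 3) ≤ Real.cos t ^ (m + 3) :=
        pow_le_pow_left₀ hbase hc _
      have ht2 : t ^ 2 = Real.pi ^ 2 / k ^ 2 := by rw [ht, div_pow]
      have hpi2 : Real.pi ^ 2 ≤ 9.9225 := by nlinarith [Real.pi_pos]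
      have goal2 : (1 : ℝ) / 2 ≤ (1 - t ^ 2 / 2) ^ (m + 3) := by
        rcases Nat.lt_or_ge m 3 with hm | hm
        · interval_cases m
          · -- m = 0 : k = 5, exponent 3
            have hk' : k = 5 := by rw [hk]; norm_num
            have hb : (0.80155 : ℝ) ≤ 1 - t ^ 2 / 2 := by
              rw [ht2, hk']; nlinarith
            calc (1 : ℝ) / 2 ≤ (0.80155 : ℝ) ^ 3 := by norm_num
              _ ≤ (1 - t ^ 2 / 2) ^ 3 := pow_le_pow_left₀ (by norm_num) hb _
          · -- m = 1 : k = 6, exponent 4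
            have hk' : k = 6 := by rw [hk]; norm_num
            have hb : (0.86218 : ℝ) ≤ 1 - t ^ 2 / 2 := by
              rw [ht2, hk']; nlinarith
            calc (1 : ℝ) / 2 ≤ (0.86218 : ℝ) ^ 4 := by norm_num
              _ ≤ (1 - t ^ 2 / 2) ^ 4 := pow_le_pow_left₀ (by norm_num) hb _
          · -- m = 2 : k = 7, exponent 5
            have hk' : k = 7 := by rw [hk]; norm_num
            have hb : (0.89875 : ℝ) ≤ 1 - t ^ 2 / 2 := by
              rw [ht2, hk']; nlinarith
            calc (1 : ℝ) / 2 ≤ (0.89875 : ℝ) ^ 5 := by norm_num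
              _ ≤ (1 - t ^ 2 / 2) ^ 5 := pow_le_pow_left₀ (by norm_num) hb _
        · -- m ≥ 3 : Bernoulli
          have hmr : (3 : ℝ) ≤ (m : ℝ) := by exact_mod_cast hm
          have hineq : ((m : ℝ) + 3) * t ^ 2 ≤ 1 := by
            rw [ht2, ← mul_div_assoc, div_le_one (by positivity), hk]
            nlinarith
          have hber := one_add_mul_le_pow (a := -(t ^ 2 / 2)) (by nlinarith) (m + 3)
          calc (1 : ℝ) / 2 ≤ 1 + ((m + 3 : ℕ) : ℝ) * -(t ^ 2 / 2) := by
                push_cast; nlinarith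
            _ ≤ (1 + -(t ^ 2 / 2)) ^ (m + 3) := hber
            _ = (1 - t ^ 2 / 2) ^ (m + 3) := by ring_nf
      exact goal2.trans hpow

theorem stmt_11 (n : ℕ) :
    (2 : ℝ) ^ n ≤ p n (4 * Real.cos (Real.pi / ((n : ℝ) + 3)) ^ 2) ∧
    p n (4 * Real.cos (Real.pi / ((n : ℝ) + 4)) ^ 2) ≤ (2 : ℝ) ^ (n + 2) := by
  constructor
  · rw [p_val1]
    have h := cos_pow_ge n
    rw [mul_pow]
    calc (2 : ℝ) ^ n = 2 ^ (n + 1) * (1 / 2) := by rw [pow_succ]; ring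
      _ ≤ 2 ^ (n + 1) * Real.cos (Real.pi / ((n : ℝ) + 3)) ^ (n + 1) := by
          apply mul_le_mul_of_nonneg_left h (by positivity)
  · rw [p_val2]
    have hcle : Real.cos (Real.pi / ((n : ℝ) + 4)) ≤ 1 := Real.cos_le_one _
    have hcnn : 0 ≤ Real.cos (Real.pi / ((n : ℝ) + 4)) := by
      apply Real.cos_nonneg_of_mem_Icc
      constructor
      · have h0 : (0:ℝ) ≤ Real.pi / ((n : ℝ) + 4) := by positivity
        linarith [Real.pi_pos]
      · rw [div_le_div_iff₀ (by positivity) (by norm_num : (0:ℝ) < 2)]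
        nlinarith [Real.pi_pos, (Nat.cast_nonneg n : (0:ℝ) ≤ (n:ℝ))]
    calc (2 * Real.cos (Real.pi / ((n : ℝ) + 4))) ^ (n + 2) ≤ 2 ^ (n + 2) := by
          apply pow_le_pow_left₀ (by linarith) (by linarith)
      _ = (2 : ℝ) ^ (n + 2) := rfl
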